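/- For even w \ge 0, the space W_w^+ of even period polynomials contains X^w - Y^w, and W_w^+ decomposes as the direct sum Q(X^w - Y^w) \oplus W_w^{+,0}, where W_w^{+,0} = { P \in W_w^+ : P(X, 0) = 0 }. -/
import Mathlib


open MvPolynomial

/-- The slash action `(P|γ)(X,Y) = P(aX+bY, cX+dY)` for `γ = [[a,b],[c,d]]`,
as a linear endomorphism of polynomials in two variables. -/
noncomputable def slashL (a b c d : ℚ) :
    MvPolynomial (Fin 2) ℚ →ₗ[ℚ] MvPolynomial (Fin 2) ℚ :=
  (MvPolynomial.aeval
    ![a • MvPolynomial.X 0 + b • MvPolynomial.X 1,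
      c • MvPolynomial.X 0 + d • MvPolynomial.X 1]).toLinearMap

/-- `V_w`: the space of homogeneous polynomials of degree `w` in `X, Y`. -/
noncomputable def Vw (w : ℕ) : Submodule ℚ (MvPolynomial (Fin 2) ℚ) :=
  MvPolynomial.homogeneousSubmodule (Fin 2) ℚ w

/-- The space of period polynomials
`W_w = { P ∈ V_w : P|(1+S) = 0, P|(1+U+U²) = 0 }`,
with `S = [[0,-1],[1,0]]`, `U = [[1,-1],[1,0]]`, `U² = [[0,-1],[1,-1]]`. -/
noncomputable def Ww (w : ℕ) : Submodule ℚ (MvPolynomial (Fin 2) ℚ) :=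
  Vw w ⊓ LinearMap.ker (LinearMap.id + slashL 0 (-1) 1 0) ⊓
    LinearMap.ker (LinearMap.id + slashL 1 (-1) 1 0 + slashL 0 (-1) 1 (-1))

/-- `W_w⁺ = { P ∈ W_w : P(-X,Y) = P(X,Y) }`. -/
noncomputable def WwPlus (w : ℕ) : Submodule ℚ (MvPolynomial (Fin 2) ℚ) :=
  Ww w ⊓ LinearMap.ker (slashL (-1) 0 0 1 - LinearMap.id)

/-- `W_w⁻ = { P ∈ W_w : P(-X,Y) = -P(X,Y) }`. -/
noncomputable def WwMinus (w : ℕ) : Submodule ℚ (MvPolynomial (Fin 2) ℚ) :=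
  Ww w ⊓ LinearMap.ker (slashL (-1) 0 0 1 + LinearMap.id)

/-- `W_w^{+,0} = { P ∈ W_w⁺ : P(X,0) = 0 }`. -/
noncomputable def WwPlusZero (w : ℕ) : Submodule ℚ (MvPolynomial (Fin 2) ℚ) :=
  WwPlus w ⊓ LinearMap.ker (slashL 1 0 0 0)

lemma aux_key {w : ℕ} {P : MvPolynomial (Fin 2) ℚ} (hP : P.IsHomogeneous w) :
    MvPolynomial.aeval ![MvPolynomial.X 0, 0] P
      = P.coeff (Finsupp.single (0 : Fin 2) w) • (MvPolynomial.X 0 ^ w : MvPolynomial (Fin 2) ℚ) := by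
  conv_lhs => rw [P.as_sum]
  rw [map_sum]
  rw [Finset.sum_eq_single (Finsupp.single 0 w)]
  · rw [aeval_monomial]
    rw [Finsupp.prod_fintype _ _ (by intro i; simp)]
    simp [Fin.prod_univ_two, Finsupp.single_apply, Algebra.smul_def]
  · intro d hd hne
    rw [aeval_monomial]
    rw [Finsupp.prod_fintype _ _ (by intro i; simp)]
    have hdeg : d 0 + d 1 = w := by
      have := hP (MvPolynomial.mem_support_iff.mp hd)
      simpa [Finsupp.weight_apply, Finsupp.sum_fintype, Fin.sum_univ_two] using this
    have hd1 : d 1 ≠ 0 := by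
      intro h0
      apply hne
      ext i
      fin_cases i <;> simp [Finsupp.single_apply, h0, ← hdeg]
    simp [Fin.prod_univ_two, zero_pow hd1]
  · intro h
    rw [MvPolynomial.notMem_support_iff.mp h]
    simp

lemma aux_eqC {P : MvPolynomial (Fin 2) ℚ} (hP : P.IsHomogeneous 0) :
    P = MvPolynomial.C (P.coeff 0) := by
  ext d
  by_cases hd : d = 0
  · simp [hd]
  · rw [hP.coeff_eq_zero (by simpa [Finsupp.degree_eq_zero_iff] using hd)]
    simp [MvPolynomial.coeff_C, Ne.symm hd]

/-- For even `w`, `X^w - Y^w ∈ W_w⁺`, and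
`W_w⁺ = ℚ(X^w - Y^w) ⊕ W_w^{+,0}`. -/
theorem even_period_polynomials_splitting (w : ℕ) (hw : Even w) :
    (MvPolynomial.X 0 ^ w - MvPolynomial.X 1 ^ w : MvPolynomial (Fin 2) ℚ) ∈ WwPlus w ∧
    Disjoint
      (Submodule.span ℚ {(MvPolynomial.X 0 ^ w - MvPolynomial.X 1 ^ w : MvPolynomial (Fin 2) ℚ)})
      (WwPlusZero w) ∧
    Submodule.span ℚ {(MvPolynomial.X 0 ^ w - MvPolynomial.X 1 ^ w : MvPolynomial (Fin 2) ℚ)} ⊔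
      WwPlusZero w = WwPlus w := by
  set E : MvPolynomial (Fin 2) ℚ := MvPolynomial.X 0 ^ w - MvPolynomial.X 1 ^ w with hE
  have hmemE : E ∈ WwPlus w := by
    refine ⟨⟨⟨?_, LinearMap.mem_ker.mpr ?_⟩, LinearMap.mem_ker.mpr ?_⟩, LinearMap.mem_ker.mpr ?_⟩
    · exact (MvPolynomial.isHomogeneous_X_pow 0 w).sub (MvPolynomial.isHomogeneous_X_pow 1 w)
    all_goals
      simp only [LinearMap.add_apply, LinearMap.sub_apply, LinearMap.id_apply, slashL,
        AlgHom.toLinearMap_apply, hE, map_sub, map_pow, aeval_X, Matrix.cons_val_zero,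
        Matrix.cons_val_one, Matrix.head_cons, zero_smul, one_smul, neg_smul, zero_add, add_zero]
      rw [hw.neg_pow]
      ring
  have hvec : (![(1:ℚ) • MvPolynomial.X 0 + (0:ℚ) • MvPolynomial.X 1,
      (0:ℚ) • MvPolynomial.X 0 + (0:ℚ) • MvPolynomial.X 1] : Fin 2 → MvPolynomial (Fin 2) ℚ)
      = ![MvPolynomial.X 0, 0] := by
    funext i; fin_cases i <;> simp
  have hslash : ∀ P : MvPolynomial (Fin 2) ℚ,
      slashL 1 0 0 0 P = MvPolynomial.aeval ![MvPolynomial.X 0, 0] P := by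
    intro P
    rw [slashL, AlgHom.toLinearMap_apply, hvec]
  refine ⟨hmemE, ?_, ?_⟩
  · -- disjointness
    rw [Submodule.disjoint_def]
    intro x hx hx0
    obtain ⟨c, rfl⟩ := Submodule.mem_span_singleton.mp hx
    rcases Nat.eq_zero_or_pos w with h0 | hpos
    · have : E = 0 := by simp [hE, h0]
      rw [this, smul_zero]
    · have hker := LinearMap.mem_ker.mp hx0.2
      rw [map_smul, hslash] at hker
      have hEv : MvPolynomial.aeval ![MvPolynomial.X 0, 0] E
          = (MvPolynomial.X 0 ^ w : MvPolynomial (Fin 2) ℚ) := by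
        simp [hE, zero_pow hpos.ne']
      rw [hEv] at hker
      have hc : c = 0 := by
        by_contra hc
        exact pow_ne_zero w (MvPolynomial.X_ne_zero (0 : Fin 2))
          (by rw [← one_smul ℚ ((MvPolynomial.X 0 : MvPolynomial (Fin 2) ℚ) ^ w), ← inv_mul_cancel₀ hc,
                mul_smul, hker, smul_zero])
      rw [hc, zero_smul]
  · -- sup = WwPlus
    refine le_antisymm (sup_le ?_ inf_le_left) ?_
    · rw [Submodule.span_le, Set.singleton_subset_iff]
      exact hmemE
    · rcases Nat.eq_zero_or_pos w with h0 | hpos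
      · -- w = 0 : every element of WwPlus 0 is 0
        intro P hP
        have hhom : P.IsHomogeneous w := hP.1.1.1
        have hC : P = MvPolynomial.C (P.coeff 0) := aux_eqC (h0 ▸ hhom)
        have hS := LinearMap.mem_ker.mp hP.1.1.2
        rw [LinearMap.add_apply, LinearMap.id_apply] at hS
        rw [hC] at hS
        simp only [slashL, AlgHom.toLinearMap_apply, MvPolynomial.aeval_C,
          MvPolynomial.algebraMap_eq] at hS
        have hc0 : P.coeff 0 = 0 := by
          have h2 : MvPolynomial.C (P.coeff 0 + P.coeff 0) = (0 : MvPolynomial (Fin 2) ℚ) := by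
            rw [map_add]; exact hS
          have := (MvPolynomial.C_eq_zero).mp h2
          linarith
        have hP0 : P = 0 := by rw [hC, hc0, map_zero]
        rw [hP0]
        exact zero_mem _
      · intro P hP
        have hhom : P.IsHomogeneous w := hP.1.1.1
        set c := P.coeff (Finsupp.single (0 : Fin 2) w) with hc
        have hker2 : slashL 1 0 0 0 (P - c • E) = 0 := by
          rw [map_sub, map_smul, hslash, hslash, aux_key hhom]
          have hEv : MvPolynomial.aeval ![MvPolynomial.X 0, 0] E
              = (MvPolynomial.X 0 ^ w : MvPolynomial (Fin 2) ℚ) := by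
            simp [hE, zero_pow hpos.ne']
          rw [hEv, hc, sub_self]
        exact Submodule.mem_sup.mpr ⟨c • E,
          Submodule.smul_mem _ _ (Submodule.mem_span_singleton_self E),
          P - c • E, ⟨sub_mem hP (Submodule.smul_mem _ _ hmemE), LinearMap.mem_ker.mpr hker2⟩,
          by abel⟩
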